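/- The mapping from a φ-row to its minimal representative — replacing each block A_i^{m_i} in the maximal factorization by A_i^{min(m_i, rank(A_i)+1)} — produces a φ-row equivalent (∼) to the original, and two φ-rows are equivalent iff they have the same minimal representative. -/

import Mathlib

structure Atom (α β : Type) where
  req : Finset α
  prop : Finset β
deriving DecidableEq

def rank {α β : Type} (REQ : Finset α) (A : Atom α β) : ℕ :=
  REQ.card - A.req.card

def ValidFact {α β : Type} (l : List (Atom α β × ℕ)) : Prop :=
  (∀ b ∈ l, 0 < b.2) ∧ List.Chain' (fun b b' => b.1 ≠ b'.1) l

def BlockEquiv {α β : Type} (REQ : Finset α) (b b' : Atom α β × ℕ) : Prop :=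
  b.1 = b'.1 ∧ (b.2 = b'.2 ∨ (rank REQ b.1 < b.2 ∧ rank REQ b.1 < b'.2))

def RowEquiv {α β : Type} (REQ : Finset α) (r r' : List (Atom α β × ℕ)) : Prop :=
  List.Forall₂ (BlockEquiv REQ) r r'

/-- The minimal representative: each block A^m is replaced by A^{min(m, rank(A)+1)}. -/
def minimize {α β : Type} (REQ : Finset α) (l : List (Atom α β × ℕ)) :
    List (Atom α β × ℕ) :=
  l.map (fun b => (b.1, min b.2 (rank REQ b.1 + 1)))

/-- Minimizing a φ-row yields an equivalent φ-row, and two φ-rows are equivalent iff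
they have the same minimal representative. -/
theorem minimize_spec {α β : Type} (REQ : Finset α) (r r' : List (Atom α β × ℕ))
    (hr : ValidFact r) (hr' : ValidFact r') :
    ValidFact (minimize REQ r) ∧ RowEquiv REQ r (minimize REQ r) ∧
    (RowEquiv REQ r r' ↔ minimize REQ r = minimize REQ r') := by
  obtain ⟨hp, hc⟩ := hr
  refine ⟨⟨?_, ?_⟩, ?_, ?_, ?_⟩
  · intro b hb
    simp only [minimize, List.mem_map] at hb
    obtain ⟨a, ha, rfl⟩ := hb
    have := hp a ha
    simp only [lt_min_iff]
    omega
  · rw [minimize]; show List.IsChain _ _; rw [List.isChain_map]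
    exact hc
  · rw [RowEquiv, minimize, List.forall₂_map_right_iff, List.forall₂_same]
    intro b hb
    refine ⟨rfl, ?_⟩
    simp only
    omega
  · intro h
    clear hp hc hr'
    induction h with
    | nil => rfl
    | cons hbb _ ih =>
      rename_i b b' _ _
      simp only [minimize, List.map_cons, List.cons.injEq]
      refine ⟨?_, ih⟩
      obtain ⟨h1, h2⟩ := hbb
      rw [← h1]
      simp only [Prod.mk.injEq, true_and]
      omega
  · intro h
    clear hp hc hr'
    induction r generalizing r' with
    | nil =>
      cases r' with
      | nil => exact List.Forall₂.nil
      | cons b t => simp [minimize] at h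
    | cons b t ih =>
      cases r' with
      | nil => simp [minimize] at h
      | cons b' t' =>
        simp only [minimize, List.map_cons, List.cons.injEq, Prod.mk.injEq] at h
        obtain ⟨⟨h1, h2⟩, h3⟩ := h
        refine List.Forall₂.cons ⟨h1, ?_⟩ (ih t' h3)
        rw [← h1] at h2
        omega
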